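/- Let n ≥ 1 be an integer, λ > 0, A ∈ ℂ nonzero, and ε ∈ ℂ with (2n+1)|ε| < 1. Define 𝔄(ξ) = [A (ξ/|ξ|)^{n+1} + ε \overline{A} (\overline{ξ}/|ξ|)^{n+1}] (ξ/|ξ|)^{-n} |ξ|^λ for ξ ≠ 0 and 𝔄(0) = 0. Then for all ξ, ζ ∈ ℂ, |𝔄(ξ) − 𝔄(ζ)| ≥ (1 − (2n+1)|ε|)|A| · | |ξ|^{λ−1} ξ − |ζ|^{λ−1} ζ |. -/

import Mathlib

open Complex

/-- The leading term `𝔄` of the hodographic representation. -/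
noncomputable def frakA (n : ℕ) (lam : ℝ) (A ε : ℂ) (ξ : ℂ) : ℂ :=
  if ξ = 0 then 0 else
    (A * (ξ / (‖ξ‖ : ℝ)) ^ (n + 1) +
        ε * (starRingEnd ℂ) A * ((starRingEnd ℂ) ξ / (‖ξ‖ : ℝ)) ^ (n + 1)) *
      (ξ / (‖ξ‖ : ℝ)) ^ (-(n : ℤ)) * ((‖ξ‖ ^ lam : ℝ) : ℂ)

noncomputable def kmapAux (n : ℕ) (w : ℂ) : ℂ :=
  if w = 0 then 0 else w ^ (2 * n + 1) / ((‖w‖ : ℝ) : ℂ) ^ (2 * n)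

lemma unit_pow_lip (M : ℕ) (a b : ℂ) (ha : ‖a‖ ≤ 1) (hb : ‖b‖ ≤ 1) :
    ‖a ^ M - b ^ M‖ ≤ M * ‖a - b‖ := by
  rw [← geom_sum₂_mul, norm_mul]
  refine mul_le_mul_of_nonneg_right ?_ (norm_nonneg _)
  calc ‖∑ i ∈ Finset.range M, a ^ i * b ^ (M - 1 - i)‖
      ≤ ∑ i ∈ Finset.range M, ‖a ^ i * b ^ (M - 1 - i)‖ :=
        norm_sum_le _ _
    _ ≤ ∑ _i ∈ Finset.range M, (1 : ℝ) := by
        refine Finset.sum_le_sum fun i _ => ?_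
        rw [norm_mul, norm_pow, norm_pow]
        exact mul_le_one₀ (pow_le_one₀ (norm_nonneg a) ha) (by positivity)
          (pow_le_one₀ (norm_nonneg b) hb)
    _ = M := by simp

lemma normSq_smul_sub (r s : ℝ) (a b : ℂ) (ha : Complex.normSq a = 1)
    (hb : Complex.normSq b = 1) :
    Complex.normSq ((r : ℂ) * a - (s : ℂ) * b) = (r - s) ^ 2 + r * s * Complex.normSq (a - b) := by
  simp only [Complex.normSq_apply, Complex.sub_re, Complex.sub_im, Complex.mul_re,
    Complex.mul_im, Complex.ofReal_re, Complex.ofReal_im] at *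
  linear_combination (r ^ 2 - r * s) * ha + (s ^ 2 - r * s) * hb

lemma kmapAux_eq (n : ℕ) (w : ℂ) (hw : w ≠ 0) :
    kmapAux n w = ((‖w‖ : ℝ) : ℂ) * (w / ((‖w‖ : ℝ) : ℂ)) ^ (2 * n + 1) := by
  have hr0 : ‖w‖ ≠ 0 := norm_ne_zero_iff.mpr hw
  have hr : ((‖w‖ : ℝ) : ℂ) ≠ 0 := Complex.ofReal_ne_zero.mpr hr0
  rw [kmapAux, if_neg hw, div_pow]
  field_simp
  ring

lemma abs_kmapAux (n : ℕ) (z : ℂ) (hz : z ≠ 0) :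
    ‖kmapAux n z‖ = ‖z‖ := by
  have hz0 : ‖z‖ ≠ 0 := norm_ne_zero_iff.mpr hz
  rw [kmapAux_eq n z hz, norm_mul, norm_pow, norm_div, Complex.norm_real, norm_norm,
    div_self hz0, one_pow, mul_one]

lemma kmapAux_lip (n : ℕ) (w v : ℂ) :
    ‖kmapAux n w - kmapAux n v‖
      ≤ (2 * (n : ℝ) + 1) * ‖w - v‖ := by
  have hMcast : ((2 * n + 1 : ℕ) : ℝ) = 2 * (n : ℝ) + 1 := by push_cast; ring
  have hM1 : (1 : ℝ) ≤ 2 * (n : ℝ) + 1 := by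
    have := Nat.cast_nonneg (α := ℝ) n; linarith
  have hk0 : kmapAux n 0 = 0 := by simp [kmapAux]
  by_cases hw : w = 0
  · by_cases hv : v = 0
    · simp [hw, hv, hk0]
    · rw [hw, hk0, zero_sub, zero_sub, norm_neg, norm_neg,
        abs_kmapAux n v hv]
      nlinarith [norm_nonneg v]
  · by_cases hv : v = 0
    · rw [hv, hk0, sub_zero, sub_zero, abs_kmapAux n w hw]
      nlinarith [norm_nonneg w]
    · set r : ℝ := ‖w‖ with hrdef
      set s : ℝ := ‖v‖ with hsdef
      have hr : 0 < r := norm_pos_iff.mpr hw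
      have hs : 0 < s := norm_pos_iff.mpr hv
      have hrC : (r : ℂ) ≠ 0 := Complex.ofReal_ne_zero.mpr hr.ne'
      have hsC : (s : ℂ) ≠ 0 := Complex.ofReal_ne_zero.mpr hs.ne'
      set a : ℂ := w / (r : ℂ) with hadef
      set b : ℂ := v / (s : ℂ) with hbdef
      have ha : ‖a‖ = 1 := by
        rw [hadef, norm_div, Complex.norm_real, Real.norm_eq_abs, _root_.abs_of_pos hr, div_self hr.ne']
      have hb : ‖b‖ = 1 := by
        rw [hbdef, norm_div, Complex.norm_real, Real.norm_eq_abs, _root_.abs_of_pos hs, div_self hs.ne']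
      have hwa : (r : ℂ) * a = w := by
        rw [hadef]; field_simp
      have hvb : (s : ℂ) * b = v := by
        rw [hbdef]; field_simp
      set M : ℕ := 2 * n + 1 with hMdef
      have hpow : ‖a ^ M - b ^ M‖ ≤ (M : ℝ) * ‖a - b‖ :=
        unit_pow_lip M a b ha.le hb.le
      have hnsq : Complex.normSq (a ^ M - b ^ M) ≤ (M : ℝ) ^ 2 * Complex.normSq (a - b) := by
        rw [← Complex.sq_norm, ← Complex.sq_norm]
        calc ‖a ^ M - b ^ M‖ ^ 2 ≤ ((M : ℝ) * ‖a - b‖) ^ 2 :=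
              pow_le_pow_left₀ (norm_nonneg _) hpow 2
          _ = (M : ℝ) ^ 2 * ‖a - b‖ ^ 2 := by ring
      have haM : Complex.normSq (a ^ M) = 1 := by
        rw [Complex.normSq_eq_norm_sq, norm_pow, ha]; simp
      have hbM : Complex.normSq (b ^ M) = 1 := by
        rw [Complex.normSq_eq_norm_sq, norm_pow, hb]; simp
      have ha1 : Complex.normSq a = 1 := by rw [Complex.normSq_eq_norm_sq, ha]; simp
      have hb1 : Complex.normSq b = 1 := by rw [Complex.normSq_eq_norm_sq, hb]; simp
      have hM1' : (1 : ℝ) ≤ (M : ℝ) := by rw [hMcast]; exact hM1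
      have h1M2 : (1 : ℝ) ≤ (M : ℝ) ^ 2 := by nlinarith
      have key : Complex.normSq ((r : ℂ) * a ^ M - (s : ℂ) * b ^ M)
          ≤ (M : ℝ) ^ 2 * Complex.normSq ((r : ℂ) * a - (s : ℂ) * b) := by
        rw [normSq_smul_sub r s (a ^ M) (b ^ M) haM hbM, normSq_smul_sub r s a b ha1 hb1]
        have h3 : (r - s) ^ 2 ≤ (M : ℝ) ^ 2 * (r - s) ^ 2 :=
          le_mul_of_one_le_left (sq_nonneg _) h1M2
        have h4 : r * s * Complex.normSq (a ^ M - b ^ M)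
            ≤ r * s * ((M : ℝ) ^ 2 * Complex.normSq (a - b)) :=
          mul_le_mul_of_nonneg_left hnsq (by positivity)
        nlinarith [h3, h4]
      have hfin : ‖(r : ℂ) * a ^ M - (s : ℂ) * b ^ M‖
          ≤ (M : ℝ) * ‖(r : ℂ) * a - (s : ℂ) * b‖ := by
        have hsq : ‖(r : ℂ) * a ^ M - (s : ℂ) * b ^ M‖ ^ 2
            ≤ ((M : ℝ) * ‖(r : ℂ) * a - (s : ℂ) * b‖) ^ 2 := by
          rw [Complex.sq_norm, mul_pow, Complex.sq_norm]; exact key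
        exact le_of_pow_le_pow_left₀ two_ne_zero (by positivity) hsq
      rw [kmapAux_eq n w hw, kmapAux_eq n v hv, ← hrdef, ← hsdef, ← hadef, ← hbdef, ← hMdef,
        ← hMcast]
      calc ‖(r : ℂ) * a ^ M - (s : ℂ) * b ^ M‖
          ≤ (M : ℝ) * ‖(r : ℂ) * a - (s : ℂ) * b‖ := hfin
        _ = (M : ℝ) * ‖w - v‖ := by rw [hwa, hvb]

lemma frakA_eq (n : ℕ) (lam : ℝ) (A ε : ℂ) (ξ : ℂ) :
    frakA n lam A ε ξ
      = A * (((‖ξ‖ ^ (lam - 1) : ℝ) : ℂ) * ξ)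
        + ε * (starRingEnd ℂ) A
          * (starRingEnd ℂ) (kmapAux n (((‖ξ‖ ^ (lam - 1) : ℝ) : ℂ) * ξ)) := by
  by_cases hξ : ξ = 0
  · simp [frakA, kmapAux, hξ]
  · have hr : 0 < ‖ξ‖ := norm_pos_iff.mpr hξ
    set r : ℝ := ‖ξ‖ with hrdef
    set t : ℝ := r ^ lam with htdef
    have ht : 0 < t := Real.rpow_pos_of_pos hr lam
    set u : ℂ := ξ / (r : ℂ) with hudef
    have hu : ‖u‖ = 1 := by
      rw [hudef, norm_div, Complex.norm_real, Real.norm_eq_abs, _root_.abs_of_pos hr, div_self hr.ne']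
    have hu0 : u ≠ 0 := by
      intro h; rw [h] at hu; simp at hu
    have huc : u * (starRingEnd ℂ) u = 1 := by
      rw [Complex.mul_conj, Complex.normSq_eq_norm_sq, hu]; simp
    have hui : u⁻¹ = (starRingEnd ℂ) u := inv_eq_of_mul_eq_one_right huc
    have hrlam : r ^ (lam - 1) * r = t := by
      rw [htdef, Real.rpow_sub hr, Real.rpow_one]
      field_simp
    have hF : ((r ^ (lam - 1) : ℝ) : ℂ) * ξ = (t : ℂ) * u := by
      have hrC : (r : ℂ) ≠ 0 := Complex.ofReal_ne_zero.mpr hr.ne'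
      rw [hudef, ← hrlam]
      push_cast
      field_simp
    have hFabs : ‖(t : ℂ) * u‖ = t := by
      rw [norm_mul, Complex.norm_real, hu, mul_one, Real.norm_eq_abs, _root_.abs_of_pos ht]
    have hF0 : (t : ℂ) * u ≠ 0 :=
      mul_ne_zero (Complex.ofReal_ne_zero.mpr ht.ne') hu0
    have hK : kmapAux n ((t : ℂ) * u) = (t : ℂ) * u ^ (2 * n + 1) := by
      rw [kmapAux_eq n _ hF0, hFabs]
      congr 2
      rw [mul_div_cancel_left₀]
      exact Complex.ofReal_ne_zero.mpr ht.ne'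
    have hconjdiv : (starRingEnd ℂ) ξ / (r : ℂ) = (starRingEnd ℂ) u := by
      rw [hudef, map_div₀, Complex.conj_ofReal]
    rw [frakA, if_neg hξ, ← hrdef, ← htdef, hF, hK, ← hudef, hconjdiv]
    rw [map_mul, map_pow, Complex.conj_ofReal]
    rw [zpow_neg, zpow_natCast, ← inv_pow, hui]
    set c : ℂ := (starRingEnd ℂ) u with hcdef
    have hkey : u ^ (n + 1) * c ^ n = u := by
      calc u ^ (n + 1) * c ^ n = u * (u * c) ^ n := by ring
        _ = u := by rw [huc]; simp
    linear_combination (A * (t : ℂ)) * hkey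

theorem frakA_quantitative_injectivity (n : ℕ) (lam : ℝ) (A ε : ℂ)
    (hn : 1 ≤ n) (hlam : 0 < lam) (hA : A ≠ 0) (hε : (2 * (n : ℝ) + 1) * ‖ε‖ < 1) :
    ∀ ξ ζ : ℂ,
      ‖frakA n lam A ε ξ - frakA n lam A ε ζ‖
        ≥ (1 - (2 * (n : ℝ) + 1) * ‖ε‖) * ‖A‖ *
            ‖(((‖ξ‖ ^ (lam - 1) : ℝ) : ℂ) * ξ -
              ((‖ζ‖ ^ (lam - 1) : ℝ) : ℂ) * ζ)‖ := by
  intro ξ ζ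
  set Fξ : ℂ := ((‖ξ‖ ^ (lam - 1) : ℝ) : ℂ) * ξ with hFξ
  set Fζ : ℂ := ((‖ζ‖ ^ (lam - 1) : ℝ) : ℂ) * ζ with hFζ
  set Kξ : ℂ := kmapAux n Fξ with hKξ
  set Kζ : ℂ := kmapAux n Fζ with hKζ
  have hdiff : frakA n lam A ε ξ - frakA n lam A ε ζ
      = A * (Fξ - Fζ) + ε * (starRingEnd ℂ) A * ((starRingEnd ℂ) Kξ - (starRingEnd ℂ) Kζ) := by
    rw [frakA_eq n lam A ε ξ, frakA_eq n lam A ε ζ, ← hFξ, ← hFζ, ← hKξ, ← hKζ]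
    ring
  have hsecond : ‖ε * (starRingEnd ℂ) A * ((starRingEnd ℂ) Kξ - (starRingEnd ℂ) Kζ)‖
      ≤ ‖ε‖ * ‖A‖ * ((2 * (n : ℝ) + 1) * ‖Fξ - Fζ‖) := by
    rw [norm_mul, norm_mul, Complex.norm_conj, ← map_sub, Complex.norm_conj]
    exact mul_le_mul_of_nonneg_left (kmapAux_lip n Fξ Fζ) (by positivity)
  have hfirst : ‖A‖ * ‖Fξ - Fζ‖
      ≤ ‖frakA n lam A ε ξ - frakA n lam A ε ζ‖
        + ‖ε * (starRingEnd ℂ) A * ((starRingEnd ℂ) Kξ - (starRingEnd ℂ) Kζ)‖ := by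
    have h1 : A * (Fξ - Fζ)
        = (frakA n lam A ε ξ - frakA n lam A ε ζ)
          - ε * (starRingEnd ℂ) A * ((starRingEnd ℂ) Kξ - (starRingEnd ℂ) Kζ) := by
      rw [hdiff]; ring
    calc ‖A‖ * ‖Fξ - Fζ‖ = ‖A * (Fξ - Fζ)‖ := by
          rw [norm_mul]
      _ ≤ _ := by
          rw [h1]
          simpa [sub_eq_add_neg] using
            norm_add_le (frakA n lam A ε ξ - frakA n lam A ε ζ)
              (-(ε * (starRingEnd ℂ) A * ((starRingEnd ℂ) Kξ - (starRingEnd ℂ) Kζ)))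
  have hring : (1 - (2 * (n : ℝ) + 1) * ‖ε‖) * ‖A‖ * ‖Fξ - Fζ‖
      = ‖A‖ * ‖Fξ - Fζ‖
        - ‖ε‖ * ‖A‖ * ((2 * (n : ℝ) + 1) * ‖Fξ - Fζ‖) := by
    ring
  rw [ge_iff_le, hring]
  linarith
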